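/- Reordering can only happen between concurrent transactions: let ρ be a reordering of a finite set T of transactions (with pairwise distinct commit timestamps). If t, u ∈ T are such that the relative order of their commit timestamps under ρ differs from their original relative order, then both t and u are pending, and t and u are concurrent (with respect to both the original and the new commit timestamps). -/

import Mathlib

/-- A timestamp is a pair `(m, p)` of naturals, ordered lexicographically. -/
abbrev Timestamp : Type := ℕ ×ₗ ℕ

/-- A transaction: a start timestamp of the form `(m, 0)`, a commit timestamp
`(M, q)` with `q ≥ 1` and `start ≤ (M, 0)`, a finite read set of key/version
pairs with versions at most the start timestamp, and a finite write set of keys. -/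
structure Txn (Key : Type) where
  startTS : Timestamp
  commitTS : Timestamp
  start_snd : (ofLex startTS).2 = 0
  commit_pos : 1 ≤ (ofLex commitTS).2
  start_le : startTS ≤ toLex ((ofLex commitTS).1, 0)
  reads : Finset (Key × Timestamp)
  writes : Finset Key
  reads_snapshot : ∀ kv ∈ reads, kv.2 ≤ startTS

/-- Concurrency of two transactions with respect to a commit-timestamp assignment `C`. -/
def ConcurrentWith {Key : Type} (C : Txn Key → Timestamp) (t1 t2 : Txn Key) : Prop :=
  (C t1 < C t2 → t2.startTS < C t1) ∧ (C t2 < C t1 → t1.startTS < C t2)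

/-- Concurrency with respect to the original commit timestamps. -/
def Concurrent {Key : Type} (t1 t2 : Txn Key) : Prop :=
  ConcurrentWith (fun t => t.commitTS) t1 t2

/-- Write-write dependency `t1 →ww t2` w.r.t. commit assignment `C`. -/
def wwC {Key : Type} (C : Txn Key → Timestamp) (t1 t2 : Txn Key) : Prop :=
  t1 ≠ t2 ∧ (∃ k, k ∈ t1.writes ∧ k ∈ t2.writes) ∧ C t1 < C t2

/-- Write-read dependency `t1 →wr t2` w.r.t. commit assignment `C`. -/
def wrC {Key : Type} (C : Txn Key → Timestamp) (t1 t2 : Txn Key) : Prop :=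
  t1 ≠ t2 ∧ ∃ kv ∈ t2.reads, kv.1 ∈ t1.writes ∧ kv.2 = C t1

/-- Read-write dependency `t1 →rw t2` w.r.t. commit assignment `C`. -/
def rwC {Key : Type} (C : Txn Key → Timestamp) (t1 t2 : Txn Key) : Prop :=
  t1 ≠ t2 ∧ ∃ kv ∈ t1.reads, kv.1 ∈ t2.writes ∧ kv.2 < C t2

/-- The dependency relation: union of ww, wr and rw. -/
def depC {Key : Type} (C : Txn Key → Timestamp) (t1 t2 : Txn Key) : Prop :=
  wwC C t1 t2 ∨ wrC C t1 t2 ∨ rwC C t1 t2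

/-- `t` is committed with respect to the next block number `M`. -/
def Committed {Key : Type} (M : ℕ) (t : Txn Key) : Prop :=
  (ofLex t.commitTS).1 < M

/-- `t` is pending with respect to the next block number `M`:
its commit timestamp is `(M, p)` (with `p ≥ 1` automatic). -/
def Pending {Key : Type} (M : ℕ) (t : Txn Key) : Prop :=
  (ofLex t.commitTS).1 = M

/-- A reordering of the transactions in `T`: it assigns to each pending
transaction a new commit timestamp `(M, p')` with `p' ≥ 1`, injectively on `T`,
leaving committed transactions' commit timestamps (and, implicitly, all start
timestamps, read sets and write sets) unchanged. -/
structure Reordering {Key : Type} (M : ℕ) (T : Finset (Txn Key)) where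
  newCommit : Txn Key → Timestamp
  fix_committed : ∀ t ∈ T, Committed M t → newCommit t = t.commitTS
  pending_block : ∀ t ∈ T, Pending M t → (ofLex (newCommit t)).1 = M
  pending_pos : ∀ t ∈ T, Pending M t → 1 ≤ (ofLex (newCommit t)).2
  inj : ∀ t ∈ T, ∀ u ∈ T, newCommit t = newCommit u → t = u

/-- reordering can only happen between concurrent transactions.
Let `ρ` be a reordering of a finite set `T` of transactions with pairwise
distinct commit timestamps (each committed or pending w.r.t. the next block
`M`). If the relative order of the commit timestamps of `t, u ∈ T` under `ρ`
differs from the original relative order, then both `t` and `u` are pending,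
and they are concurrent with respect to both the original and the new commit
timestamps. -/
theorem reorder_only_concurrent {Key : Type} (M : ℕ) (T : Finset (Txn Key))
    (hdist : ∀ t ∈ T, ∀ u ∈ T, t.commitTS = u.commitTS → t = u)
    (hcp : ∀ t ∈ T, Committed M t ∨ Pending M t)
    (ρ : Reordering M T) (t u : Txn Key) (ht : t ∈ T) (hu : u ∈ T)
    (hflip : (t.commitTS < u.commitTS ∧ ρ.newCommit u < ρ.newCommit t) ∨
             (u.commitTS < t.commitTS ∧ ρ.newCommit t < ρ.newCommit u)) :
    Pending M t ∧ Pending M u ∧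
    ConcurrentWith (fun x => x.commitTS) t u ∧
    ConcurrentWith ρ.newCommit t u := by
  have key : ∀ a b : Timestamp, (ofLex a).1 < (ofLex b).1 → a < b := by
    intro a b h
    exact Prod.Lex.lt_iff.mpr (Or.inl h)
  have key2 : ∀ a b : Timestamp, (ofLex a).1 = (ofLex b).1 → (ofLex a).2 < (ofLex b).2 → a < b := by
    intro a b h1 h2
    exact Prod.Lex.lt_iff.mpr (Or.inr ⟨h1, h2⟩)
  have hpend : Pending M t ∧ Pending M u := by
    rcases hcp t ht with hct | hpt
    · rcases hcp u hu with hcu | hpu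
      · have e1 := ρ.fix_committed t ht hct
        have e2 := ρ.fix_committed u hu hcu
        rcases hflip with ⟨h1, h2⟩ | ⟨h1, h2⟩ <;> rw [e1, e2] at h2 <;>
          exact absurd h1 (lt_asymm h2)
      · have h1 : t.commitTS < u.commitTS := key _ _ (by rw [hpu]; exact hct)
        have h2 : ρ.newCommit t < ρ.newCommit u := by
          rw [ρ.fix_committed t ht hct]
          exact key _ _ (by rw [ρ.pending_block u hu hpu]; exact hct)
        rcases hflip with ⟨h3, h4⟩ | ⟨h3, h4⟩
        · exact absurd h2 (lt_asymm h4)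
        · exact absurd h1 (lt_asymm h3)
    · rcases hcp u hu with hcu | hpu
      · have h1 : u.commitTS < t.commitTS := key _ _ (by rw [hpt]; exact hcu)
        have h2 : ρ.newCommit u < ρ.newCommit t := by
          rw [ρ.fix_committed u hu hcu]
          exact key _ _ (by rw [ρ.pending_block t ht hpt]; exact hcu)
        rcases hflip with ⟨h3, h4⟩ | ⟨h3, h4⟩
        · exact absurd h1 (lt_asymm h3)
        · exact absurd h2 (lt_asymm h4)
      · exact ⟨hpt, hpu⟩
  obtain ⟨hpt, hpu⟩ := hpend
  have hstart : ∀ a : Txn Key, Pending M a → a.startTS ≤ toLex (M, 0) := by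
    intro a hpa
    have := a.start_le
    rwa [hpa] at this
  have horig : ∀ a b : Txn Key, Pending M a → Pending M b → b.startTS < a.commitTS := by
    intro a b hpa hpb
    refine lt_of_le_of_lt (hstart b hpb) (key2 _ _ ?_ ?_)
    · exact hpa.symm
    · exact lt_of_lt_of_le Nat.zero_lt_one a.commit_pos
  have hnew : ∀ a b : Txn Key, a ∈ T → Pending M a → Pending M b → b.startTS < ρ.newCommit a := by
    intro a b ha hpa hpb
    refine lt_of_le_of_lt (hstart b hpb) (key2 _ _ ?_ ?_)
    · exact (ρ.pending_block a ha hpa).symm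
    · exact lt_of_lt_of_le Nat.zero_lt_one (ρ.pending_pos a ha hpa)
  exact ⟨hpt, hpu, ⟨fun _ => horig t u hpt hpu, fun _ => horig u t hpu hpt⟩,
    ⟨fun _ => hnew t u ht hpt hpu, fun _ => hnew u t hu hpu hpt⟩⟩
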